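/- Let O be a commutative ring, G a finite group, and I ⊆ J right O[G]-modules that are finitely generated and free as O-modules, such that J/I is a projective O-module. Then the sequence 0 → Hom_{O[G]}(J/I, O[G]) → Hom_{O[G]}(J, O[G]) → Hom_{O[G]}(I, O[G]) → 0, whose maps are precomposition with the quotient map J → J/I and restriction of homomorphisms from J to I, is exact. -/

import Mathlib

open MonoidAlgebra MulOpposite

section frob
variable {O : Type*} [CommRing O] {G : Type*} [Group G] [Fintype G]
  {M : Type*} [AddCommGroup M] [Module O M]
  [Module (MonoidAlgebra O G)ᵐᵒᵖ M] [IsScalarTower O (MonoidAlgebra O G)ᵐᵒᵖ M]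

noncomputable def frob (φ : M →ₗ[O] O) :
    M →ₗ[(MonoidAlgebra O G)ᵐᵒᵖ] MonoidAlgebra O G where
  toFun m := ∑ g : G, MonoidAlgebra.single g⁻¹ (φ (op (MonoidAlgebra.single g (1:O)) • m))
  map_add' x y := by
    simp [smul_add, map_add, Finsupp.single_add, Finset.sum_add_distrib]
  map_smul' r m := by
    induction r using MulOpposite.rec' with
    | _ a =>
    simp only [RingHom.id_apply]
    induction a using MonoidAlgebra.induction_on with
    | of h =>
      have key : ∀ g : G, op (MonoidAlgebra.single g (1:O)) • op ((of O G) h) • m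
          = op (MonoidAlgebra.single (h * g) (1:O)) • m := by
        intro g
        rw [smul_smul, ← op_mul, MonoidAlgebra.of_apply, MonoidAlgebra.single_mul_single,
          one_mul]
      simp only [key]
      rw [op_smul_eq_mul, Finset.sum_mul]
      refine Fintype.sum_bijective (fun g => h * g) (Group.mulLeft_bijective h) _ _ ?_
      intro g
      rw [MonoidAlgebra.of_apply, MonoidAlgebra.single_mul_single, mul_one]
      congr 1
      group
    | add a b ha hb =>
      simp only [op_add, add_smul, smul_add, map_add, MonoidAlgebra.single_add,
        Finset.sum_add_distrib, ha, hb]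
    | smul r a ih =>
      have h1 : op (r • a) • m = r • (op a • m) := by rw [op_smul, smul_assoc]
      have h2 : op (r • a) • (∑ g : G, MonoidAlgebra.single g⁻¹
          (φ (op (MonoidAlgebra.single g (1:O)) • m)))
          = r • (op a • (∑ g : G, MonoidAlgebra.single g⁻¹
          (φ (op (MonoidAlgebra.single g (1:O)) • m)))) := by
        rw [op_smul_eq_mul, op_smul_eq_mul, mul_smul_comm]
      rw [h1, h2, ← ih, Finset.smul_sum]
      refine Finset.sum_congr rfl fun g _ => ?_
      rw [smul_comm (op (MonoidAlgebra.single g (1:O))) r, map_smul, MonoidAlgebra.smul_single]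
end frob

section frob2
variable {O : Type*} [CommRing O] {G : Type*} [Group G] [Fintype G]
  {M : Type*} [AddCommGroup M] [Module O M]
  [Module (MonoidAlgebra O G)ᵐᵒᵖ M] [IsScalarTower O (MonoidAlgebra O G)ᵐᵒᵖ M]

lemma frob_eval (f : M →ₗ[(MonoidAlgebra O G)ᵐᵒᵖ] MonoidAlgebra O G) :
    frob ((Finsupp.lapply (1:G) ∘ₗ (MonoidAlgebra.coeffLinearEquiv O).toLinearMap : MonoidAlgebra O G →ₗ[O] O) ∘ₗ f.restrictScalars O) = f := by
  refine LinearMap.ext fun m => ?_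
  show ∑ g : G, MonoidAlgebra.single g⁻¹ ((f (op (MonoidAlgebra.single g (1:O)) • m)).coeff 1) = f m
  have h1 : ∀ g : G, f (op (MonoidAlgebra.single g (1:O)) • m)
      = f m * MonoidAlgebra.single g 1 := by
    intro g; rw [map_smul, op_smul_eq_mul]
  simp only [h1, MonoidAlgebra.coeff_mul_single_apply, one_mul, mul_one]
  exact (Equiv.sum_comp (Equiv.inv G) (fun k => MonoidAlgebra.single k ((f m).coeff k))).trans
    (by ext k; simp [MonoidAlgebra.coeff_sum, MonoidAlgebra.coeff_single, Finsupp.single_apply])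
end frob2


/-- Let `O` be a commutative ring, `G` a finite group, and
`I ⊆ J` right `O[G]`-modules (modules over the opposite of the group ring)
that are finitely generated and free as `O`-modules, with `J/I` projective
over `O`.  Then `0 → Hom_{O[G]}(J/I, O[G]) → Hom_{O[G]}(J, O[G]) →
Hom_{O[G]}(I, O[G]) → 0` is exact, where the maps are precomposition with
the quotient map and restriction. -/
theorem stmt_1 (O : Type*) [CommRing O] (G : Type*) [Group G] [Finite G]
    (J : Type*) [AddCommGroup J] [Module O J]
    [Module (MonoidAlgebra O G)ᵐᵒᵖ J] [IsScalarTower O (MonoidAlgebra O G)ᵐᵒᵖ J]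
    (I : Submodule (MonoidAlgebra O G)ᵐᵒᵖ J)
    [Module.Finite O J] [Module.Free O J]
    [Module.Finite O (I.restrictScalars O)] [Module.Free O (I.restrictScalars O)]
    [Module.Projective O (J ⧸ I)] :
    Function.Injective
      (fun g : (J ⧸ I) →ₗ[(MonoidAlgebra O G)ᵐᵒᵖ] MonoidAlgebra O G => g ∘ₗ I.mkQ) ∧
    (∀ f : J →ₗ[(MonoidAlgebra O G)ᵐᵒᵖ] MonoidAlgebra O G,
      f ∘ₗ I.subtype = 0 ↔
        ∃ g : (J ⧸ I) →ₗ[(MonoidAlgebra O G)ᵐᵒᵖ] MonoidAlgebra O G, f = g ∘ₗ I.mkQ) ∧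
    Function.Surjective
      (fun f : J →ₗ[(MonoidAlgebra O G)ᵐᵒᵖ] MonoidAlgebra O G => f ∘ₗ I.subtype) := by
  cases nonempty_fintype G
  refine ⟨?_, ?_, ?_⟩
  · intro g₁ g₂ h
    refine LinearMap.ext fun x => ?_
    obtain ⟨y, rfl⟩ := I.mkQ_surjective x
    exact LinearMap.congr_fun h y
  · intro f
    constructor
    · intro h
      have hle : I ≤ LinearMap.ker f := by
        intro x hx
        exact LinearMap.congr_fun h ⟨x, hx⟩
      exact ⟨I.liftQ f hle, (I.liftQ_mkQ f hle).symm⟩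
    · rintro ⟨g, rfl⟩
      refine LinearMap.ext fun x => ?_
      have : I.mkQ (x : J) = 0 := (Submodule.Quotient.mk_eq_zero I).2 x.2
      simp [this]
  · intro f
    -- split the O-module inclusion I ⊆ J using projectivity of J/I
    obtain ⟨σ, hσ⟩ := Module.projective_lifting_property (I.mkQ.restrictScalars O)
      (LinearMap.id : (J ⧸ I) →ₗ[O] (J ⧸ I)) (I.mkQ_surjective)
    set θ : J →ₗ[O] J :=
      (LinearMap.id : J →ₗ[O] J) - σ ∘ₗ I.mkQ.restrictScalars O with hθ
    have hmem : ∀ x : J, θ x ∈ I.restrictScalars O := by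
      intro x
      have h0 : I.mkQ (θ x) = 0 := by
        have h2 := LinearMap.congr_fun hσ (I.mkQ x)
        simp only [LinearMap.comp_apply, LinearMap.restrictScalars_apply,
          LinearMap.id_apply] at h2
        simp only [hθ, LinearMap.sub_apply, LinearMap.id_apply, LinearMap.comp_apply,
          LinearMap.restrictScalars_apply, map_sub, h2, sub_self]
      rw [Submodule.restrictScalars_mem, ← Submodule.ker_mkQ I]
      exact LinearMap.mem_ker.2 h0
    set π : J →ₗ[O] ↥(I.restrictScalars O) :=
      LinearMap.codRestrict (I.restrictScalars O) θ hmem with hπ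
    set φ : ↥(I.restrictScalars O) →ₗ[O] O :=
      (Finsupp.lapply (1:G) ∘ₗ (MonoidAlgebra.coeffLinearEquiv O).toLinearMap : MonoidAlgebra O G →ₗ[O] O) ∘ₗ f.restrictScalars O with hφ
    refine ⟨frob (φ ∘ₗ π), ?_⟩
    have key : ∀ y : ↥I, (φ ∘ₗ π) (y : J) = φ y := by
      intro y
      refine congrArg φ (Subtype.ext ?_)
      show θ (y : J) = (y : J)
      rw [hθ, LinearMap.sub_apply, LinearMap.id_apply, LinearMap.comp_apply,
        LinearMap.restrictScalars_apply]
      have : I.mkQ (y : J) = 0 := (Submodule.Quotient.mk_eq_zero I).2 y.2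
      rw [this, map_zero, sub_zero]
    refine LinearMap.ext fun x => ?_
    show frob (φ ∘ₗ π) (x : J) = f x
    have : frob φ x = f x := LinearMap.congr_fun (frob_eval f) x
    calc frob (φ ∘ₗ π) (x : J)
        = ∑ g : G, MonoidAlgebra.single g⁻¹
            ((φ ∘ₗ π) (op (MonoidAlgebra.single g (1:O)) • (x : J))) := rfl
      _ = ∑ g : G, MonoidAlgebra.single g⁻¹
            (φ (op (MonoidAlgebra.single g (1:O)) • x)) := by
          refine Finset.sum_congr rfl fun g _ => ?_
          congr 1
          exact key (op (MonoidAlgebra.single g (1:O)) • x)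
      _ = frob φ x := rfl
      _ = f x := this
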